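/- Let p and q be twice continuously differentiable positive probability densities on ℝ with p(y)·(d/dy) log q(y) → 0 as |y| → ±∞ and all relevant integrals finite. Then ∫ H(y,q) p(y) dy - ∫ H(y,p) p(y) dy = ∫ ((d/dy) log p(y) - (d/dy) log q(y))² p(y) dy. -/

import Mathlib

open MeasureTheory Real Filter

/-- Score function `(log p)'` of a positive density `p` on `ℝ`. -/
noncomputable def scoreFn (p : ℝ → ℝ) (y : ℝ) : ℝ := deriv (fun w => Real.log (p w)) y

/-- Hyvärinen score `H(y,p) = 2 (log p)''(y) + ((log p)'(y))²`. -/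
noncomputable def hyvScore (p : ℝ → ℝ) (y : ℝ) : ℝ :=
  2 * deriv (scoreFn p) y + (scoreFn p y) ^ 2

lemma scoreFn_hasDerivAt (p : ℝ → ℝ) (hp : ContDiff ℝ 2 p) (hppos : ∀ y, 0 < p y) :
    ∀ y, HasDerivAt (scoreFn p) (deriv (scoreFn p) y) y := by
  have h : ContDiff ℝ 2 (fun w => Real.log (p w)) :=
    contDiff_iff_contDiffAt.mpr fun x => (hp.contDiffAt).log (ne_of_gt (hppos x))
  have h2 : ContDiff ℝ 1 (scoreFn p) := by
    have := (contDiff_succ_iff_deriv (n := 1)).mp (by exact_mod_cast h)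
    exact this.2.2
  intro y
  exact (h2.differentiable one_ne_zero y).hasDerivAt

lemma density_hasDerivAt (p : ℝ → ℝ) (hp : ContDiff ℝ 2 p) (hppos : ∀ y, 0 < p y) (y : ℝ) :
    HasDerivAt p (scoreFn p y * p y) y := by
  have hd : HasDerivAt p (deriv p y) y := (hp.differentiable (by norm_num) y).hasDerivAt
  have hs : scoreFn p y = deriv p y / p y := by
    have := (hd.log (ne_of_gt (hppos y))).deriv
    simpa [scoreFn] using this
  rw [hs, div_mul_cancel₀ _ (ne_of_gt (hppos y))]
  exact hd

/-- Integration-by-parts identity: the expected Hyvärinen score difference equals the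
relative Fisher information divergence. -/
theorem expected_hyvScore_diff_eq_relative_fisher
    (p q : ℝ → ℝ) (hp : ContDiff ℝ 2 p) (hq : ContDiff ℝ 2 q)
    (hppos : ∀ y, 0 < p y) (hqpos : ∀ y, 0 < q y)
    (hpint : ∫ y : ℝ, p y = 1) (hqint : ∫ y : ℝ, q y = 1)
    (hvanish_top : Tendsto (fun y => p y * scoreFn q y) atTop (nhds 0))
    (hvanish_bot : Tendsto (fun y => p y * scoreFn q y) atBot (nhds 0))
    (hvanishp_top : Tendsto (fun y => p y * scoreFn p y) atTop (nhds 0))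
    (hvanishp_bot : Tendsto (fun y => p y * scoreFn p y) atBot (nhds 0))
    (hint1 : Integrable (fun y => hyvScore q y * p y))
    (hint2 : Integrable (fun y => hyvScore p y * p y))
    (hint3 : Integrable (fun y => (scoreFn p y - scoreFn q y) ^ 2 * p y))
    (hint4 : Integrable (fun y => scoreFn p y * scoreFn q y * p y))
    (hint5 : Integrable (fun y => (scoreFn p y) ^ 2 * p y)) :
    (∫ y : ℝ, hyvScore q y * p y) - ∫ y : ℝ, hyvScore p y * p y =
      ∫ y : ℝ, (scoreFn p y - scoreFn q y) ^ 2 * p y := by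
  -- integrability of (scoreFn q)^2 * p
  have hsq2 : Integrable (fun y => (scoreFn q y) ^ 2 * p y) := by
    have h := ((hint3.sub hint5).add (hint4.const_mul 2))
    refine h.congr ?_
    filter_upwards with y
    simp only [Pi.add_apply, Pi.sub_apply, Pi.mul_apply]
    ring
  -- integrability of p * deriv (scoreFn q)
  have hdq : Integrable (fun y => p y * deriv (scoreFn q) y) := by
    have h := (hint1.sub hsq2).const_mul (1/2 : ℝ)
    refine h.congr ?_
    filter_upwards with y
    simp only [hyvScore, Pi.add_apply, Pi.sub_apply, Pi.mul_apply]
    ring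
  -- integrability of p * deriv (scoreFn p)
  have hdp : Integrable (fun y => p y * deriv (scoreFn p) y) := by
    have h := (hint2.sub hint5).const_mul (1/2 : ℝ)
    refine h.congr ?_
    filter_upwards with y
    simp only [hyvScore, Pi.add_apply, Pi.sub_apply, Pi.mul_apply]
    ring
  -- integration by parts for q
  have ibpq : ∫ y : ℝ, p y * deriv (scoreFn q) y
      = (0 : ℝ) - 0 - ∫ y : ℝ, (scoreFn p y * p y) * scoreFn q y := by
    refine integral_mul_deriv_eq_deriv_mul
      (fun y _ => density_hasDerivAt p hp hppos y)
      (fun y _ => scoreFn_hasDerivAt q hq hqpos y)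
      ?_ ?_ ?_ ?_
    · exact hdq
    · refine hint4.congr ?_
      filter_upwards with y
      simp only [Pi.mul_apply]
      ring
    · exact hvanish_bot
    · exact hvanish_top
  have ibpp : ∫ y : ℝ, p y * deriv (scoreFn p) y
      = (0 : ℝ) - 0 - ∫ y : ℝ, (scoreFn p y * p y) * scoreFn p y := by
    refine integral_mul_deriv_eq_deriv_mul
      (fun y _ => density_hasDerivAt p hp hppos y)
      (fun y _ => scoreFn_hasDerivAt p hp hppos y)
      ?_ ?_ ?_ ?_
    · exact hdp
    · refine hint5.congr ?_
      filter_upwards with y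
      simp only [Pi.mul_apply]
      ring
    · exact hvanishp_bot
    · exact hvanishp_top
  -- rewrite the Hyvärinen integrals
  have hq_split : (∫ y : ℝ, hyvScore q y * p y)
      = 2 * (∫ y : ℝ, p y * deriv (scoreFn q) y) + ∫ y : ℝ, (scoreFn q y) ^ 2 * p y := by
    have : (fun y => hyvScore q y * p y)
        = fun y => 2 * (p y * deriv (scoreFn q) y) + (scoreFn q y) ^ 2 * p y := by
      funext y; simp only [hyvScore]; ring
    rw [this, integral_add (hdq.const_mul 2) hsq2, integral_const_mul]
  have hp_split : (∫ y : ℝ, hyvScore p y * p y)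
      = 2 * (∫ y : ℝ, p y * deriv (scoreFn p) y) + ∫ y : ℝ, (scoreFn p y) ^ 2 * p y := by
    have : (fun y => hyvScore p y * p y)
        = fun y => 2 * (p y * deriv (scoreFn p) y) + (scoreFn p y) ^ 2 * p y := by
      funext y; simp only [hyvScore]; ring
    rw [this, integral_add (hdp.const_mul 2) hint5, integral_const_mul]
  -- rewrite the cross-term integrals
  have hcrossq : (∫ y : ℝ, (scoreFn p y * p y) * scoreFn q y)
      = ∫ y : ℝ, scoreFn p y * scoreFn q y * p y := by
    congr 1; funext y; ring
  have hcrossp : (∫ y : ℝ, (scoreFn p y * p y) * scoreFn p y)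
      = ∫ y : ℝ, (scoreFn p y) ^ 2 * p y := by
    congr 1; funext y; ring
  -- expand RHS
  have hrhs : (∫ y : ℝ, (scoreFn p y - scoreFn q y) ^ 2 * p y)
      = (∫ y : ℝ, (scoreFn p y) ^ 2 * p y) - 2 * (∫ y : ℝ, scoreFn p y * scoreFn q y * p y)
        + ∫ y : ℝ, (scoreFn q y) ^ 2 * p y := by
    have : (fun y => (scoreFn p y - scoreFn q y) ^ 2 * p y)
        = fun y => ((scoreFn p y) ^ 2 * p y - 2 * (scoreFn p y * scoreFn q y * p y))
          + (scoreFn q y) ^ 2 * p y := by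
      funext y; ring
    have hA : Integrable (fun y => (scoreFn p y) ^ 2 * p y
        - 2 * (scoreFn p y * scoreFn q y * p y)) := by
      refine (hint5.sub (hint4.const_mul 2)).congr ?_
      filter_upwards with y
      simp only [Pi.sub_apply]
    rw [this, integral_add hA hsq2, integral_sub hint5 (hint4.const_mul 2), integral_const_mul]
  rw [hq_split, hp_split, ibpq, ibpp, hcrossq, hcrossp, hrhs]
  ring
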